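/- Let w and w' be left preferred Gauss codes on n letters. Then w and w' are orientedly equivalent as Gauss codes if and only if w' = (shift^LP)^k(w) for some integer k ≥ 0; and w and w' are unorientedly equivalent as Gauss codes if and only if w' = (shift^LP)^k(w) or w' = (shift^LP)^k(rev^LP(w)) for some integer k ≥ 0. -/

import Mathlib

/-- A Gauss code on `n` letters: a bijection from the `2*n` positions to
letters paired with a side (`false` = L, `true` = R). -/
abbrev GaussCode (n : ℕ) := Fin (2 * n) ≃ Fin n × Bool

instance (n : ℕ) [NeZero n] : NeZero (2 * n) := ⟨by have := NeZero.ne n; omega⟩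

namespace GaussCode

variable {n : ℕ}

/-- `π_*(w)`: relabel the letters by the permutation `π`. -/
def permAct (π : Equiv.Perm (Fin n)) (w : GaussCode n) : GaussCode n :=
  w.trans (π.prodCongr (Equiv.refl Bool))

open Fin.NatCast in
/-- `shift[m](w)`: the code whose entry at position `i` is the entry of `w` at
position `i + m` (mod `2n`). -/
def shift [NeZero n] (m : ℕ) (w : GaussCode n) : GaussCode n :=
  (Equiv.addRight ((m : Fin (2 * n)))).trans w

/-- `rev(w)`: the code whose entry at position `i` is the entry of `w` at
position `2n - 1 - i`. -/
def rev (w : GaussCode n) : GaussCode n :=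
  (Fin.revPerm).trans w

/-- A Gauss code is left preferred if its `L`-entries appear in the order
`(1,L), (2,L), …, (n,L)` and its entry at position `0` is `(1,L)`. -/
def IsLeftPreferred [NeZero n] (w : GaussCode n) : Prop :=
  StrictMono (fun j : Fin n => w.symm (j, false)) ∧ w 0 = (0, false)

/-- `proj^LP(w)`: relabel letters in the order of appearance of their `L`-entries,
then rotate so that `(1,L)` is at position `0`. -/
def projLP [NeZero n] (w : GaussCode n) : GaussCode n :=
  let π : Equiv.Perm (Fin n) := (Tuple.sort (fun j : Fin n => w.symm (j, false)))⁻¹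
  let w' := permAct π w
  shift ((w'.symm ((0 : Fin n), false)).val) w'

/-- `shift^LP(w) := proj^LP(shift[1](w))`. -/
def shiftLP [NeZero n] (w : GaussCode n) : GaussCode n :=
  projLP (shift 1 w)

/-- `rev^LP(w) := proj^LP(rev(w))`. -/
def revLP [NeZero n] (w : GaussCode n) : GaussCode n :=
  projLP (rev w)

/-- The value of an entry in the order `(1,L) < (1,R) < (2,L) < (2,R) < …`. -/
def entryKey (e : Fin n × Bool) : ℕ :=
  2 * e.1.val + (if e.2 then 1 else 0)

/-- Lexicographic (strict) order on Gauss codes, comparing entries position by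
position in the order `(1,L) < (1,R) < (2,L) < (2,R) < …`. -/
def lexLt (w w' : GaussCode n) : Prop :=
  ∃ i : Fin (2 * n), (∀ k, k < i → w k = w' k) ∧ entryKey (w i) < entryKey (w' i)

/-- Lexicographic order on Gauss codes. -/
def lexLe (w w' : GaussCode n) : Prop :=
  w = w' ∨ lexLt w w'

/-- A left preferred Gauss code is left canonical if it is the smallest element
of its `shift^LP`-orbit `{w, shift^LP(w), …, (shift^LP)^{n-1}(w)}`. -/
def IsLeftCanonical [NeZero n] (w : GaussCode n) : Prop :=
  IsLeftPreferred w ∧ ∀ k < n, lexLe w (shiftLP^[k] w)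

/-- `proj^LC(w)`: the smallest element of the `shift^LP`-orbit of `proj^LP(w)`. -/
noncomputable def projLC [NeZero n] (w : GaussCode n) : GaussCode n :=
  letI := Classical.propDecidable
  if h : ∃ v : GaussCode n, (∃ k < n, v = shiftLP^[k] (projLP w)) ∧
      ∀ k < n, lexLe v (shiftLP^[k] (projLP w))
  then h.choose else projLP w

/-- `rev^LC(w) := proj^LC(rev(w))`. -/
noncomputable def revLC [NeZero n] (w : GaussCode n) : GaussCode n :=
  projLC (rev w)

/-- Oriented equivalence of Gauss codes: `w' = shift[m](π_*(w))` for some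
permutation `π` and integer `m`. -/
def OrientedEquiv [NeZero n] (w w' : GaussCode n) : Prop :=
  ∃ (π : Equiv.Perm (Fin n)) (m : ℕ), w' = shift m (permAct π w)

/-- Unoriented equivalence: `w` is orientedly equivalent to `w'` or to `rev(w')`. -/
def UnorientedEquiv [NeZero n] (w w' : GaussCode n) : Prop :=
  OrientedEquiv w w' ∨ OrientedEquiv w (rev w')

/-- A Gauss code is 1-reducible if two cyclically adjacent entries share the same letter. -/
def OneReducible [NeZero n] (w : GaussCode n) : Prop :=
  ∃ i : Fin (2 * n), (w i).1 = (w (i + 1)).1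

/-- A Gauss code is 2-reducible (cyclically, with `L = false`, `R = true`). -/
def TwoReducible [NeZero n] (w : GaussCode n) : Prop :=
  ∃ (i i' : Fin (2 * n)) (j k : Fin n), j ≠ k ∧
    ((w i = (j, false) ∧ w (i + 1) = (k, true) ∧
        w i' = (j, true) ∧ w (i' + 1) = (k, false)) ∨
     (w i = (j, false) ∧ w (i + 1) = (k, true) ∧
        w i' = (k, false) ∧ w (i' + 1) = (j, true)) ∨
     (w i = (j, true) ∧ w (i + 1) = (k, false) ∧
        w i' = (k, true) ∧ w (i' + 1) = (j, false)))

/-- A Gauss code is minimal if it is neither 1-reducible nor 2-reducible. -/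
def IsMinimal [NeZero n] (w : GaussCode n) : Prop :=
  ¬ OneReducible w ∧ ¬ TwoReducible w

/-- `σ_w`: the involution of positions sending each position to the unique other
position carrying the same letter. -/
def sigmaMap (w : GaussCode n) : Fin (2 * n) → Fin (2 * n) :=
  fun i => w.symm ((w i).1, !(w i).2)

/-- `h_w`: the side (`false` = L, `true` = R) of the entry at each position. -/
def hMap (w : GaussCode n) : Fin (2 * n) → Bool :=
  fun i => (w i).2

end GaussCode

namespace GaussCode

variable {n : ℕ} [NeZero n]

open Fin.NatCast

theorem shift_apply (m : ℕ) (w : GaussCode n) (i : Fin (2 * n)) :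
    shift m w i = w (i + (m : Fin (2 * n))) := rfl

theorem shift_symm_apply (m : ℕ) (w : GaussCode n) (x : Fin n × Bool) :
    (shift m w).symm x = w.symm x - (m : Fin (2 * n)) := by
  simp [shift, Equiv.symm_trans_apply, sub_eq_add_neg]

theorem permAct_apply (π : Equiv.Perm (Fin n)) (w : GaussCode n) (i : Fin (2 * n)) :
    permAct π w i = (π (w i).1, (w i).2) := rfl

theorem permAct_symm_apply (π : Equiv.Perm (Fin n)) (w : GaussCode n) (j : Fin n) (s : Bool) :
    (permAct π w).symm (j, s) = w.symm (π.symm j, s) := rfl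

theorem rev_apply (w : GaussCode n) (i : Fin (2 * n)) : rev w i = w i.rev := rfl

theorem shift_congr {a b : ℕ} (h : (a : Fin (2 * n)) = (b : Fin (2 * n))) (w : GaussCode n) :
    shift a w = shift b w := by unfold shift; rw [h]

theorem shift_zero (w : GaussCode n) : shift 0 w = w :=
  Equiv.ext fun i => by rw [shift_apply, Nat.cast_zero, add_zero]

theorem shift_shift (a b : ℕ) (w : GaussCode n) :
    shift a (shift b w) = shift (a + b) w :=
  Equiv.ext fun i => by
    rw [shift_apply, shift_apply, shift_apply, Nat.cast_add, add_assoc]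

theorem permAct_shift (π : Equiv.Perm (Fin n)) (m : ℕ) (w : GaussCode n) :
    permAct π (shift m w) = shift m (permAct π w) := rfl

theorem permAct_permAct (σ τ : Equiv.Perm (Fin n)) (w : GaussCode n) :
    permAct σ (permAct τ w) = permAct (σ * τ) w :=
  Equiv.ext fun i => rfl

theorem permAct_one (w : GaussCode n) : permAct 1 w = w :=
  Equiv.ext fun i => rfl

theorem rev_rev (w : GaussCode n) : rev (rev w) = w :=
  Equiv.ext fun i => by rw [rev_apply, rev_apply, Fin.rev_rev]

theorem rev_permAct (π : Equiv.Perm (Fin n)) (w : GaussCode n) :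
    rev (permAct π w) = permAct π (rev w) := rfl

theorem shift_inv_cast (m : ℕ) :
    (((2 * n - m % (2 * n)) + m : ℕ) : Fin (2 * n)) = 0 := by
  apply Fin.natCast_eq_zero.2
  have h1 : 0 < 2 * n := Nat.pos_of_ne_zero (NeZero.ne _)
  have h2 := Nat.div_add_mod m (2 * n)
  have h3 : m % (2 * n) < 2 * n := Nat.mod_lt _ h1
  have h4 : m % (2 * n) ≤ m := Nat.mod_le _ _
  have e : 2 * n - m % (2 * n) + m = 2 * n + 2 * n * (m / (2 * n)) := by omega
  rw [e]
  exact Dvd.dvd.add (dvd_refl _) (dvd_mul_right _ _)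

theorem shift_shift_inv (m : ℕ) (w : GaussCode n) :
    shift (2 * n - m % (2 * n)) (shift m w) = w := by
  rw [shift_shift, shift_congr (b := 0) (by rw [shift_inv_cast, Nat.cast_zero]) w, shift_zero]

theorem fin_rev_eq (x : Fin (2 * n)) : x.rev = -(x + 1) := by
  have h1 : 0 < 2 * n := Nat.pos_of_ne_zero (NeZero.ne _)
  have h2 : 1 < 2 * n := by have := NeZero.ne n; omega
  rcases x with ⟨xv, hx⟩
  rw [Fin.ext_iff]
  simp only [Fin.val_rev, Fin.neg_def, Fin.add_def, Fin.val_one']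
  have h5 : 1 % (2 * n) = 1 := Nat.mod_eq_of_lt h2
  rw [h5]
  rcases Nat.lt_or_ge (xv + 1) (2 * n) with h | h
  · rw [Nat.mod_eq_of_lt h, Nat.mod_eq_of_lt (by omega)]
  · have : xv + 1 = 2 * n := by omega
    rw [this, Nat.mod_self, Nat.sub_zero, Nat.mod_self]
    omega

theorem rev_shift (m : ℕ) (w : GaussCode n) :
    rev (shift m w) = shift (2 * n - m % (2 * n)) (rev w) := by
  have hc : ((2 * n - m % (2 * n) : ℕ) : Fin (2 * n)) = -(m : Fin (2 * n)) := by
    apply eq_neg_of_add_eq_zero_left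
    rw [← Nat.cast_add, shift_inv_cast]
  refine Equiv.ext fun i => ?_
  rw [rev_apply, shift_apply, shift_apply, rev_apply]
  congr 1
  rw [fin_rev_eq, fin_rev_eq, hc]
  abel

end GaussCode

namespace GaussCode

variable {n : ℕ} [NeZero n]

open Fin.NatCast

theorem sort_eq_iff_strictMono {m : ℕ} {α : Type*} [LinearOrder α] {f : Fin m → α}
    (hf : Function.Injective f) {σ : Equiv.Perm (Fin m)} :
    σ = Tuple.sort f ↔ StrictMono (f ∘ σ) := by
  rw [Tuple.eq_sort_iff]
  constructor
  · rintro ⟨h1, _⟩ i j hij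
    rcases (h1 hij.le).lt_or_eq with h | h
    · exact h
    · exact absurd (σ.injective (hf h)) hij.ne
  · intro h
    exact ⟨h.monotone, fun i j hij hfe => (hij.ne (σ.injective (hf hfe))).elim⟩

theorem strictMono_comp_sort {m : ℕ} {α : Type*} [LinearOrder α] {f : Fin m → α}
    (hf : Function.Injective f) : StrictMono (f ∘ ⇑(Tuple.sort f)) :=
  (sort_eq_iff_strictMono hf).1 rfl

theorem symm_false_injective (w : GaussCode n) :
    Function.Injective (fun j : Fin n => w.symm (j, false)) := by
  intro a b h
  have h2 := congrArg w h
  simp only [Equiv.apply_symm_apply, Prod.mk.injEq] at h2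
  exact h2.1

theorem projLP_def (w : GaussCode n) :
    projLP w = shift (((permAct (Tuple.sort fun j : Fin n => w.symm (j, false))⁻¹ w).symm
        ((0 : Fin n), false)).val)
      (permAct (Tuple.sort fun j : Fin n => w.symm (j, false))⁻¹ w) := rfl

theorem projLP_decomp (w : GaussCode n) :
    ∃ (c : ℕ) (π : Equiv.Perm (Fin n)), projLP w = shift c (permAct π w) :=
  ⟨_, _, projLP_def w⟩

theorem shiftLP_eq (w : GaussCode n) : shiftLP w = projLP (shift 1 w) := rfl

theorem revLP_eq (w : GaussCode n) : revLP w = projLP (rev w) := rfl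

theorem projLP_permAct (τ : Equiv.Perm (Fin n)) (w : GaussCode n) :
    projLP (permAct τ w) = projLP w := by
  have hf'i : Function.Injective (fun j : Fin n => (permAct τ w).symm (j, false)) :=
    symm_false_injective _
  have hsort : Tuple.sort (fun j : Fin n => (permAct τ w).symm (j, false)) =
      τ * Tuple.sort (fun j : Fin n => w.symm (j, false)) := by
    symm
    rw [sort_eq_iff_strictMono hf'i]
    have he : (fun j : Fin n => (permAct τ w).symm (j, false)) ∘
        ⇑(τ * Tuple.sort (fun j : Fin n => w.symm (j, false))) =
        (fun j : Fin n => w.symm (j, false)) ∘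
          ⇑(Tuple.sort (fun j : Fin n => w.symm (j, false))) := by
      funext i
      simp only [Function.comp_apply, Equiv.Perm.mul_apply, permAct_symm_apply,
        Equiv.symm_apply_apply]
    rw [he]
    exact strictMono_comp_sort (symm_false_injective w)
  have hkey : permAct (Tuple.sort fun j : Fin n => (permAct τ w).symm (j, false))⁻¹
        (permAct τ w)
      = permAct (Tuple.sort fun j : Fin n => w.symm (j, false))⁻¹ w := by
    rw [hsort, permAct_permAct, mul_inv_rev, inv_mul_cancel_right]
  rw [projLP_def (permAct τ w), projLP_def w, hkey]

theorem isLeftPreferred_of {v : GaussCode n}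
    (hmono : StrictMono (fun j : Fin n => v.symm (j, false))) :
    IsLeftPreferred (shift ((v.symm ((0 : Fin n), false)).val) v) := by
  constructor
  · intro i j hij
    have h0i : v.symm ((0 : Fin n), false) ≤ v.symm (i, false) := hmono.monotone (Fin.zero_le i)
    have h0j : v.symm ((0 : Fin n), false) ≤ v.symm (j, false) := hmono.monotone (Fin.zero_le j)
    have hij' : v.symm (i, false) < v.symm (j, false) := hmono hij
    show (shift _ v).symm (i, false) < (shift _ v).symm (j, false)
    rw [shift_symm_apply, shift_symm_apply, Fin.cast_val_eq_self]
    rw [Fin.lt_def, Fin.coe_sub_iff_le.2 h0i, Fin.coe_sub_iff_le.2 h0j]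
    rw [Fin.lt_def] at hij'
    rw [Fin.le_def] at h0i h0j
    omega
  · show (shift _ v) 0 = _
    rw [shift_apply, zero_add, Fin.cast_val_eq_self, Equiv.apply_symm_apply]

theorem isLeftPreferred_projLP (w : GaussCode n) : IsLeftPreferred (projLP w) := by
  rw [projLP_def w]
  apply isLeftPreferred_of
  have he : (fun j : Fin n =>
      (permAct (Tuple.sort fun j : Fin n => w.symm (j, false))⁻¹ w).symm (j, false)) =
      (fun j : Fin n => w.symm (j, false)) ∘
        ⇑(Tuple.sort (fun j : Fin n => w.symm (j, false))) := by
    funext j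
    simp only [Function.comp_apply, permAct_symm_apply, Equiv.Perm.inv_def, Equiv.symm_symm]
  rw [he]
  exact strictMono_comp_sort (symm_false_injective w)

theorem projLP_eq_self {w : GaussCode n} (hw : IsLeftPreferred w) : projLP w = w := by
  have hs : Tuple.sort (fun j : Fin n => w.symm (j, false)) = Equiv.refl (Fin n) :=
    Tuple.sort_eq_refl_iff_monotone.2 hw.1.monotone
  rw [projLP_def w, hs]
  have h1 : permAct (Equiv.refl (Fin n))⁻¹ w = w := by
    have h2 : ((Equiv.refl (Fin n))⁻¹ : Equiv.Perm (Fin n)) = 1 := rfl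
    rw [h2, permAct_one]
  rw [h1]
  have h0 : w.symm ((0 : Fin n), false) = 0 := by
    rw [← hw.2, Equiv.symm_apply_apply]
  rw [h0, Fin.val_zero, shift_zero]

theorem projLP_of_L {v : GaussCode n} (h : (v 0).2 = false) :
    projLP v = permAct (Tuple.sort fun j : Fin n => v.symm (j, false))⁻¹ v := by
  have h0 : (permAct (Tuple.sort fun j : Fin n => v.symm (j, false))⁻¹ v).symm
      ((0 : Fin n), false) = 0 := by
    have hval : (permAct (Tuple.sort fun j : Fin n => v.symm (j, false))⁻¹ v).symm
        ((0 : Fin n), false)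
        = v.symm ((Tuple.sort fun j : Fin n => v.symm (j, false)) 0, false) := by
      simp only [permAct_symm_apply, Equiv.Perm.inv_def, Equiv.symm_symm]
    obtain ⟨j0, hj0⟩ : ∃ j0, v 0 = (j0, false) := ⟨(v 0).1, by rw [← h]⟩
    have hfj0 : v.symm (j0, false) = 0 := by rw [← hj0, Equiv.symm_apply_apply]
    have hle : v.symm ((Tuple.sort fun j : Fin n => v.symm (j, false)) 0, false)
        ≤ v.symm (j0, false) := by
      have h2 := Tuple.monotone_sort (fun j : Fin n => v.symm (j, false))
        (Fin.zero_le ((Tuple.sort fun j : Fin n => v.symm (j, false)).symm j0))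
      simpa using h2
    rw [hval]
    exact le_antisymm (le_trans hle (le_of_eq hfj0)) (Fin.zero_le _)
  rw [projLP_def v, h0, Fin.val_zero, shift_zero]

theorem projLP_shift_one_of_R {v : GaussCode n} (h : (v 0).2 = true) :
    projLP (shift 1 v) = projLP v := by
  have h2 : 1 < 2 * n := by have := Nat.pos_of_ne_zero (NeZero.ne n); omega
  have hone : ((1 : ℕ) : Fin (2 * n)) = 1 := Nat.cast_one
  have hval1 : ((1 : Fin (2 * n)) : ℕ) = 1 := by rw [Fin.val_one']; exact Nat.mod_eq_of_lt h2
  have hne : ∀ j : Fin n, v.symm (j, false) ≠ 0 := by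
    intro j hj
    have h3 : v 0 = (j, false) := by rw [← hj, Equiv.apply_symm_apply]
    rw [h3] at h
    simp at h
  have hle1 : ∀ j : Fin n, (1 : Fin (2 * n)) ≤ v.symm (j, false) := by
    intro j
    rw [Fin.le_def, hval1]
    have h4 : (v.symm (j, false)).val ≠ 0 := fun hc => hne j (Fin.ext hc)
    omega
  have hsub : ∀ j : Fin n, ((v.symm (j, false) - 1 : Fin (2 * n)) : ℕ)
      = (v.symm (j, false) : ℕ) - 1 := fun j => by
    rw [Fin.coe_sub_iff_le.2 (hle1 j), hval1]
  have hsymm1 : ∀ j : Fin n, (shift 1 v).symm (j, false) = v.symm (j, false) - 1 := by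
    intro j; rw [shift_symm_apply, hone]
  have hsort : Tuple.sort (fun j : Fin n => (shift 1 v).symm (j, false)) =
      Tuple.sort (fun j : Fin n => v.symm (j, false)) := by
    symm
    rw [sort_eq_iff_strictMono (symm_false_injective (shift 1 v))]
    intro i j hij
    have hm := strictMono_comp_sort (symm_false_injective v) hij
    simp only [Function.comp_apply] at hm ⊢
    rw [hsymm1, hsymm1, Fin.lt_def, hsub, hsub]
    rw [Fin.lt_def] at hm
    have p1 := Fin.le_def.1 (hle1 ((Tuple.sort fun j : Fin n => v.symm (j, false)) i))
    rw [hval1] at p1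
    omega
  rw [projLP_def (shift 1 v), hsort, projLP_def v]
  set π := (Tuple.sort fun j : Fin n => v.symm (j, false))⁻¹ with hπ
  set a := (permAct π v).symm ((0 : Fin n), false) with ha
  have hane : a ≠ 0 := by
    rw [ha, permAct_symm_apply]
    exact hne _
  have ha' : (permAct π (shift 1 v)).symm ((0 : Fin n), false) = a - 1 := by
    rw [permAct_symm_apply, shift_symm_apply, hone, ha, permAct_symm_apply]
  have haval : a.val ≠ 0 := fun hc => hane (Fin.ext hc)
  have hle1a : (1 : Fin (2 * n)) ≤ a := by rw [Fin.le_def, hval1]; omega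
  have hval : ((a - 1 : Fin (2 * n)) : ℕ) = a.val - 1 := by
    rw [Fin.coe_sub_iff_le.2 hle1a, hval1]
  rw [ha', permAct_shift, shift_shift]
  have hfin : (a - 1 : Fin (2 * n)).val + 1 = a.val := by rw [hval]; omega
  rw [hfin]

theorem projLP_shift_one_of_L {v : GaussCode n} (h : (v 0).2 = false) :
    projLP (shift 1 v) = shiftLP (projLP v) := by
  rw [shiftLP_eq, projLP_of_L h, ← permAct_shift, projLP_permAct]

end GaussCode

namespace GaussCode

variable {n : ℕ} [NeZero n]

open Fin.NatCast

theorem orbit_fwd {w : GaussCode n} (hw : IsLeftPreferred w) (m : ℕ) :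
    ∃ k, projLP (shift m w) = shiftLP^[k] w := by
  induction m with
  | zero => exact ⟨0, by rw [shift_zero, projLP_eq_self hw, Function.iterate_zero_apply]⟩
  | succ m ih =>
    obtain ⟨k, hk⟩ := ih
    have hsplit : shift (m + 1) w = shift 1 (shift m w) := by rw [shift_shift, Nat.add_comm]
    cases hb : ((shift m w) 0).2 with
    | false =>
      exact ⟨k + 1, by
        rw [hsplit, projLP_shift_one_of_L hb, hk]
        exact (Function.iterate_succ_apply' _ _ _).symm⟩
    | true =>
      exact ⟨k, by rw [hsplit, projLP_shift_one_of_R hb, hk]⟩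

theorem orbit_fwd' (v : GaussCode n) (m : ℕ) :
    ∃ k, projLP (shift m v) = shiftLP^[k] (projLP v) := by
  obtain ⟨c, π, hdec⟩ := projLP_decomp v
  have hv : permAct π⁻¹ (shift (2 * n - c % (2 * n)) (projLP v)) = v := by
    rw [hdec, shift_shift_inv, permAct_permAct, inv_mul_cancel, permAct_one]
  obtain ⟨k, hk⟩ := orbit_fwd (isLeftPreferred_projLP v) (m + (2 * n - c % (2 * n)))
  refine ⟨k, ?_⟩
  calc projLP (shift m v)
      = projLP (shift m (permAct π⁻¹ (shift (2 * n - c % (2 * n)) (projLP v)))) := by rw [hv]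
    _ = projLP (permAct π⁻¹ (shift (m + (2 * n - c % (2 * n))) (projLP v))) := by
        rw [← permAct_shift, shift_shift]
    _ = projLP (shift (m + (2 * n - c % (2 * n))) (projLP v)) := projLP_permAct _ _
    _ = shiftLP^[k] (projLP v) := hk

theorem orbit_bwd (v : GaussCode n) (k : ℕ) :
    ∃ m, shiftLP^[k] (projLP v) = projLP (shift m v) := by
  induction k with
  | zero => exact ⟨0, by rw [Function.iterate_zero_apply, shift_zero]⟩
  | succ k ih =>
    obtain ⟨m, hm⟩ := ih
    obtain ⟨c, π, hdec⟩ := projLP_decomp (shift m v)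
    refine ⟨1 + c + m, ?_⟩
    rw [Function.iterate_succ_apply', hm, shiftLP_eq, hdec, shift_shift, ← permAct_shift,
      projLP_permAct, shift_shift]

end GaussCode


open GaussCode in
/-- for left preferred Gauss codes, oriented (resp. unoriented)
equivalence as Gauss codes coincides with lying in the same `shift^LP`-orbit
(resp. in the `shift^LP`-orbit of the code or of its `rev^LP`). -/
theorem stmt8 (n : ℕ) [NeZero n] (w w' : GaussCode n)
    (hw : IsLeftPreferred w) (hw' : IsLeftPreferred w') :
    (OrientedEquiv w w' ↔ ∃ k : ℕ, w' = shiftLP^[k] w) ∧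
    (UnorientedEquiv w w' ↔
      ∃ k : ℕ, w' = shiftLP^[k] w ∨ w' = shiftLP^[k] (revLP w)) := by
  have part1 : OrientedEquiv w w' ↔ ∃ k : ℕ, w' = shiftLP^[k] w := by
    constructor
    · rintro ⟨π, m, rfl⟩
      obtain ⟨k, hk⟩ := orbit_fwd hw m
      refine ⟨k, ?_⟩
      calc shift m (permAct π w)
          = projLP (shift m (permAct π w)) := (projLP_eq_self hw').symm
        _ = projLP (permAct π (shift m w)) := by rw [permAct_shift]
        _ = projLP (shift m w) := projLP_permAct _ _
        _ = shiftLP^[k] w := hk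
    · rintro ⟨k, rfl⟩
      have h1 : shiftLP^[k] w = shiftLP^[k] (projLP w) := by rw [projLP_eq_self hw]
      obtain ⟨m, hm⟩ := orbit_bwd w k
      obtain ⟨c, π, hdec⟩ := projLP_decomp (shift m w)
      exact ⟨π, c + m, by rw [h1, hm, hdec, permAct_shift, shift_shift]⟩
  refine ⟨part1, ?_, ?_⟩
  · rintro (h | ⟨π, m, hrev⟩)
    · obtain ⟨k, hk⟩ := part1.1 h
      exact ⟨k, Or.inl hk⟩
    · have hw'' : w' = shift (2 * n - m % (2 * n)) (permAct π (rev w)) := by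
        have h3 := congrArg rev hrev
        rw [rev_rev, rev_shift, rev_permAct] at h3
        exact h3
      obtain ⟨k, hk⟩ := orbit_fwd' (rev w) (2 * n - m % (2 * n))
      refine ⟨k, Or.inr ?_⟩
      calc w' = projLP w' := (projLP_eq_self hw').symm
        _ = projLP (shift (2 * n - m % (2 * n)) (permAct π (rev w))) := by rw [← hw'']
        _ = projLP (permAct π (shift (2 * n - m % (2 * n)) (rev w))) := by rw [permAct_shift]
        _ = projLP (shift (2 * n - m % (2 * n)) (rev w)) := projLP_permAct _ _
        _ = shiftLP^[k] (projLP (rev w)) := hk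
        _ = shiftLP^[k] (revLP w) := rfl
  · rintro ⟨k, hk | hk⟩
    · exact Or.inl (part1.2 ⟨k, hk⟩)
    · right
      obtain ⟨m, hm⟩ := orbit_bwd (rev w) k
      obtain ⟨c, π, hdec⟩ := projLP_decomp (shift m (rev w))
      have hw'2 : w' = shift (c + m) (permAct π (rev w)) := by
        rw [hk, revLP_eq, hm, hdec, permAct_shift, shift_shift]
      refine ⟨π, 2 * n - (c + m) % (2 * n), ?_⟩
      rw [hw'2, rev_shift, rev_permAct, rev_rev]
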